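/- The expansion of 8δ2 in the variable q^{1/2} = e^{πiτ} begins 8δ2(τ) = -1 - 24q^{1/2} - 24q - 96q^{3/2} + ⋯; precisely, 8δ2 is a holomorphic function of t = q^{1/2} on the punctured unit disc extending holomorphically to t = 0, and its Taylor coefficients at t = 0 in degrees 0, 1, 2, 3 are -1, -24, -24 and -96 respectively. -/

import Mathlib

open Complex Real

/-- The nome `q = e^{2πiτ}`. -/
noncomputable def qq (τ : ℂ) : ℂ := Complex.exp (2 * π * Complex.I * τ)

/-- The half-nome `q^{1/2} = e^{πiτ}`. -/
noncomputable def qh (τ : ℂ) : ℂ := Complex.exp (π * Complex.I * τ)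

/-- The Jacobi theta constant `θ₁(0,τ) = 2 q^{1/8} ∏_{j≥1} (1-q^j)(1+q^j)^2`. -/
noncomputable def theta1 (τ : ℂ) : ℂ :=
  2 * Complex.exp (π * Complex.I * τ / 4) *
    ∏' j : ℕ, ((1 - qq τ ^ (j + 1)) * (1 + qq τ ^ (j + 1)) ^ 2)

/-- The Jacobi theta constant `θ₂(0,τ) = ∏_{j≥1} (1-q^j)(1-q^{j-1/2})^2`. -/
noncomputable def theta2 (τ : ℂ) : ℂ :=
  ∏' j : ℕ, ((1 - qq τ ^ (j + 1)) * (1 - qh τ ^ (2 * j + 1)) ^ 2)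

/-- The Jacobi theta constant `θ₃(0,τ) = ∏_{j≥1} (1-q^j)(1+q^{j-1/2})^2`. -/
noncomputable def theta3 (τ : ℂ) : ℂ :=
  ∏' j : ℕ, ((1 - qq τ ^ (j + 1)) * (1 + qh τ ^ (2 * j + 1)) ^ 2)

/-- `δ₂(τ) = -(θ₁(0,τ)⁴ + θ₃(0,τ)⁴)/8`. -/
noncomputable def delta2 (τ : ℂ) : ℂ := -(theta1 τ ^ 4 + theta3 τ ^ 4) / 8

namespace EightDelta2Aux

open Metric Filter Finset

/-- `(log (1+w))/w` as a power series. -/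
noncomputable def psiLog (w : ℂ) : ℂ := ∑' n : ℕ, (-1) ^ n * w ^ n / (n + 1)

lemma psiLog_term_norm_le (w : ℂ) (n : ℕ) : ‖(-1 : ℂ) ^ n * w ^ n / (n + 1)‖ ≤ ‖w‖ ^ n := by
  rw [norm_div, norm_mul, norm_pow, norm_pow, norm_neg, norm_one, one_pow, one_mul]
  have h1 : (1 : ℝ) ≤ ‖((n : ℂ) + 1)‖ := by
    rw [show ((n : ℂ) + 1) = ((n + 1 : ℕ) : ℂ) by push_cast; ring, Complex.norm_natCast]
    exact_mod_cast Nat.succ_le_succ (Nat.zero_le n)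
  calc ‖w‖ ^ n / ‖((n : ℂ) + 1)‖ ≤ ‖w‖ ^ n / 1 := by gcongr
    _ = ‖w‖ ^ n := div_one _

lemma psiLog_summable {w : ℂ} (hw : ‖w‖ < 1) :
    Summable fun n : ℕ => (-1 : ℂ) ^ n * w ^ n / (n + 1) :=
  Summable.of_norm_bounded (summable_geometric_of_lt_one (norm_nonneg w) hw)
    (psiLog_term_norm_le w)

lemma psiLog_norm_le {w : ℂ} (hw : ‖w‖ < 1) : ‖psiLog w‖ ≤ (1 - ‖w‖)⁻¹ := by
  have hgeo := summable_geometric_of_lt_one (norm_nonneg w) hw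
  have hs : Summable fun n : ℕ => ‖(-1 : ℂ) ^ n * w ^ n / (n + 1)‖ :=
    Summable.of_nonneg_of_le (fun _ => norm_nonneg _) (psiLog_term_norm_le w) hgeo
  calc ‖psiLog w‖ ≤ ∑' n : ℕ, ‖(-1 : ℂ) ^ n * w ^ n / (n + 1)‖ := norm_tsum_le_tsum_norm hs
    _ ≤ ∑' n : ℕ, ‖w‖ ^ n := Summable.tsum_le_tsum (psiLog_term_norm_le w) hs hgeo
    _ = (1 - ‖w‖)⁻¹ := tsum_geometric_of_lt_one (norm_nonneg w) hw

lemma log_eq_psiLog {w : ℂ} (hw : ‖w‖ < 1) : Complex.log (1 + w) = w * psiLog w := by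
  have h := Complex.hasSum_taylorSeries_log hw
  rw [← h.tsum_eq, Summable.tsum_eq_zero_add h.summable]
  norm_num
  rw [psiLog, ← tsum_mul_left]
  exact tsum_congr fun n => by ring

lemma psiLog_differentiableOn : DifferentiableOn ℂ psiLog (ball (0 : ℂ) 1) := by
  intro x hx
  rw [mem_ball_zero_iff] at hx
  set r : ℝ := (1 + ‖x‖) / 2 with hr
  have hr1 : r < 1 := by rw [hr]; linarith
  have hr0 : 0 ≤ r := by positivity
  have hxr : x ∈ ball (0 : ℂ) r := by rw [mem_ball_zero_iff, hr]; linarith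
  have hd : DifferentiableOn ℂ (fun w : ℂ => ∑' n : ℕ, (-1 : ℂ) ^ n * w ^ n / (n + 1))
      (ball 0 r) := by
    refine differentiableOn_tsum_of_summable_norm (summable_geometric_of_lt_one hr0 hr1)
      (fun i => ?_) isOpen_ball (fun i w hw => ?_)
    · exact (((differentiable_pow i).const_mul _).div_const _).differentiableOn
    · rw [mem_ball_zero_iff] at hw
      exact (psiLog_term_norm_le w i).trans (pow_le_pow_left₀ (norm_nonneg w) hw.le i)
  exact (hd.differentiableAt (isOpen_ball.mem_nhds hxr)).differentiableWithinAt

/-- `(exp w - 1)/w` as a power series. -/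
noncomputable def expRatio (w : ℂ) : ℂ := ∑' n : ℕ, w ^ n / ((n + 1).factorial)

lemma expRatio_term_norm_le (w : ℂ) (n : ℕ) :
    ‖w ^ n / (((n + 1).factorial : ℕ) : ℂ)‖ ≤ ‖w‖ ^ n / n.factorial := by
  rw [norm_div, norm_pow, Complex.norm_natCast]
  exact div_le_div_of_nonneg_left (by positivity) (by positivity)
    (by exact_mod_cast Nat.factorial_le (Nat.le_succ n))

lemma exp_eq_one_add (w : ℂ) : Complex.exp w = 1 + w * expRatio w := by
  have hs : Summable fun n : ℕ => w ^ n / (n.factorial : ℂ) :=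
    NormedSpace.expSeries_div_summable w
  have he : Complex.exp w = ∑' n : ℕ, w ^ n / n.factorial := by
    rw [Complex.exp_eq_exp_ℂ, NormedSpace.exp_eq_tsum_div]
  rw [he, Summable.tsum_eq_zero_add hs]
  norm_num
  rw [expRatio, ← tsum_mul_left]
  congr 1
  funext n
  rw [pow_succ]
  ring

lemma expRatio_differentiable : Differentiable ℂ expRatio := by
  intro x
  have hd : DifferentiableOn ℂ (fun w : ℂ => ∑' n : ℕ, w ^ n / (((n + 1).factorial : ℕ) : ℂ))
      (ball 0 (‖x‖ + 1)) := by
    refine differentiableOn_tsum_of_summable_norm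
      (u := fun n => (‖x‖ + 1) ^ n / n.factorial)
      (Real.summable_pow_div_factorial _) (fun i => ?_) isOpen_ball (fun i w hw => ?_)
    · exact ((differentiable_pow i).div_const _).differentiableOn
    · rw [mem_ball_zero_iff] at hw
      refine (expRatio_term_norm_le w i).trans ?_
      have hle : ‖w‖ ^ i ≤ (‖x‖ + 1) ^ i := pow_le_pow_left₀ (norm_nonneg w) hw.le i
      simp only [div_eq_mul_inv]
      exact mul_le_mul_of_nonneg_right hle (by positivity)
  have hx : x ∈ ball (0 : ℂ) (‖x‖ + 1) := by rw [mem_ball_zero_iff]; linarith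
  exact hd.differentiableAt (isOpen_ball.mem_nhds hx)

lemma prod_rep (c : ℂ) (hc : ‖c‖ ≤ 1) (m : ℕ → ℕ) (k : ℕ) (hm1 : ∀ j, j + 1 ≤ m j)
    (hmk : ∀ j, j + 4 ≤ m (j + k)) :
    ∃ K : ℂ → ℂ, DifferentiableOn ℂ K (ball (0 : ℂ) 1) ∧
      ∀ t : ℂ, ‖t‖ < 1 → (Multipliable fun j : ℕ => 1 + c * t ^ m j) ∧
        ∏' j : ℕ, (1 + c * t ^ m j) =
          (∏ j ∈ Finset.range k, (1 + c * t ^ m j)) * (1 + t ^ 4 * K t) := by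
  have hnorm : ∀ (t : ℂ), ‖t‖ < 1 → ∀ j, ‖c * t ^ m j‖ ≤ ‖t‖ ^ (j + 1) := by
    intro t ht j
    rw [norm_mul, norm_pow]
    calc ‖c‖ * ‖t‖ ^ m j ≤ 1 * ‖t‖ ^ m j := by gcongr
      _ = ‖t‖ ^ m j := one_mul _
      _ ≤ ‖t‖ ^ (j + 1) := pow_le_pow_of_le_one (norm_nonneg t) ht.le (hm1 j)
  have hle : ∀ (t : ℂ), ‖t‖ < 1 → ∀ j, ‖c * t ^ m j‖ ≤ ‖t‖ := by
    intro t ht j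
    exact (hnorm t ht j).trans (pow_le_of_le_one (norm_nonneg t) ht.le (Nat.succ_ne_zero j))
  have hlt : ∀ (t : ℂ), ‖t‖ < 1 → ∀ j, ‖c * t ^ m j‖ < 1 :=
    fun t ht j => lt_of_le_of_lt (hle t ht j) ht
  have hne : ∀ (t : ℂ), ‖t‖ < 1 → ∀ j, 1 + c * t ^ m j ≠ 0 := by
    intro t ht j h
    have h2 := hlt t ht j
    rw [show c * t ^ m j = -1 from by linear_combination h] at h2
    simp at h2
  have hb : ∀ (t : ℂ), ‖t‖ < 1 → ∀ j,
      ‖Complex.log (1 + c * t ^ m j)‖ ≤ (1 - ‖t‖)⁻¹ * ‖t‖ ^ (j + 1) := by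
    intro t ht j
    rw [log_eq_psiLog (hlt t ht j), norm_mul, mul_comm]
    have h2 : ‖psiLog (c * t ^ m j)‖ ≤ (1 - ‖t‖)⁻¹ := by
      refine (psiLog_norm_le (hlt t ht j)).trans ?_
      exact inv_anti₀ (by linarith) (by linarith [hle t ht j])
    exact mul_le_mul h2 (hnorm t ht j) (norm_nonneg _)
      (inv_nonneg.mpr (by linarith))
  have hgeom : ∀ (t : ℂ), ‖t‖ < 1 → Summable (fun j : ℕ => (1 - ‖t‖)⁻¹ * ‖t‖ ^ (j + 1)) := by
    intro t ht
    apply Summable.mul_left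
    refine ((summable_geometric_of_lt_one (norm_nonneg t) ht).mul_right ‖t‖).congr fun j => ?_
    rw [pow_succ]
  have hsum : ∀ (t : ℂ), ‖t‖ < 1 → Summable fun j : ℕ => Complex.log (1 + c * t ^ m j) := by
    intro t ht
    exact Summable.of_norm_bounded (hgeom t ht) (hb t ht)
  obtain ⟨M, hM⟩ : ∃ M : ℂ → ℂ,
      M = fun t => ∑' j : ℕ, c * t ^ (m (j + k) - 4) * psiLog (c * t ^ m (j + k)) := ⟨_, rfl⟩
  have hMdiff : DifferentiableOn ℂ M (ball 0 1) := by
    rw [hM]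
    intro x hx
    rw [mem_ball_zero_iff] at hx
    set r : ℝ := (1 + ‖x‖) / 2 with hr
    have hr1 : r < 1 := by rw [hr]; linarith
    have hr0 : 0 ≤ r := by positivity
    have hxr : x ∈ ball (0 : ℂ) r := by rw [mem_ball_zero_iff, hr]; linarith
    have hd : DifferentiableOn ℂ
        (fun t : ℂ => ∑' j : ℕ, c * t ^ (m (j + k) - 4) * psiLog (c * t ^ m (j + k)))
        (ball 0 r) := by
      refine differentiableOn_tsum_of_summable_norm
        (u := fun j => (1 - r)⁻¹ * r ^ j)
        ((summable_geometric_of_lt_one hr0 hr1).mul_left _) (fun i => ?_) isOpen_ball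
        (fun i w hw => ?_)
      · refine DifferentiableOn.mul ((differentiable_pow _).const_mul c).differentiableOn ?_
        intro z hz
        rw [mem_ball_zero_iff] at hz
        have h1 : ‖c * z ^ m (i + k)‖ < 1 := hlt z (hz.trans hr1) _
        have h2 : DifferentiableAt ℂ psiLog (c * z ^ m (i + k)) :=
          psiLog_differentiableOn.differentiableAt
            (isOpen_ball.mem_nhds (mem_ball_zero_iff.mpr h1))
        exact (h2.comp z ((differentiableAt_pow _).const_mul c)).differentiableWithinAt
      · rw [mem_ball_zero_iff] at hw
        have hw1 : ‖w‖ < 1 := hw.trans hr1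
        rw [norm_mul, norm_mul, norm_pow]
        have h1 : ‖psiLog (c * w ^ m (i + k))‖ ≤ (1 - r)⁻¹ := by
          refine (psiLog_norm_le (hlt w hw1 _)).trans ?_
          have h3 := (hle w hw1 (i + k)).trans hw.le
          exact inv_anti₀ (by linarith) (by linarith)
        have h2 : ‖c‖ * ‖w‖ ^ (m (i + k) - 4) ≤ r ^ i := by
          calc ‖c‖ * ‖w‖ ^ (m (i + k) - 4) ≤ 1 * ‖w‖ ^ (m (i + k) - 4) := by gcongr
            _ = ‖w‖ ^ (m (i + k) - 4) := one_mul _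
            _ ≤ r ^ (m (i + k) - 4) := pow_le_pow_left₀ (norm_nonneg w) hw.le _
            _ ≤ r ^ i := pow_le_pow_of_le_one hr0 hr1.le (by have := hmk i; omega)
        calc ‖c‖ * ‖w‖ ^ (m (i + k) - 4) * ‖psiLog (c * w ^ m (i + k))‖
            ≤ r ^ i * (1 - r)⁻¹ :=
              mul_le_mul h2 h1 (norm_nonneg _) (by positivity)
          _ = (1 - r)⁻¹ * r ^ i := mul_comm _ _
    exact (hd.differentiableAt (isOpen_ball.mem_nhds hxr)).differentiableWithinAt
  refine ⟨fun t => M t * expRatio (t ^ 4 * M t), ?_, ?_⟩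
  · exact hMdiff.mul (expRatio_differentiable.comp_differentiableOn
      ((differentiable_pow 4).differentiableOn.mul hMdiff))
  · intro t ht
    have hmul : Multipliable fun j : ℕ => 1 + c * t ^ m j :=
      Complex.multipliable_of_summable_log (hsum t ht)
    refine ⟨hmul, ?_⟩
    have hprod : Complex.exp (∑' j : ℕ, Complex.log (1 + c * t ^ m j))
        = ∏' j : ℕ, (1 + c * t ^ m j) :=
      Complex.cexp_tsum_eq_tprod (hne t ht) (hsum t ht)
    rw [← hprod]
    have hsplit : ∑' j : ℕ, Complex.log (1 + c * t ^ m j)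
        = ∑ j ∈ Finset.range k, Complex.log (1 + c * t ^ m j)
          + ∑' j : ℕ, Complex.log (1 + c * t ^ m (j + k)) :=
      (Summable.sum_add_tsum_nat_add k (hsum t ht)).symm
    have htail : ∑' j : ℕ, Complex.log (1 + c * t ^ m (j + k)) = t ^ 4 * M t := by
      simp only [hM]
      rw [← tsum_mul_left]
      refine tsum_congr fun j => ?_
      have hp : t ^ m (j + k) = t ^ 4 * t ^ (m (j + k) - 4) := by
        rw [← pow_add]
        congr 1
        have := hmk j; omega
      rw [log_eq_psiLog (hlt t ht (j + k))]
      linear_combination c * psiLog (c * t ^ m (j + k)) * hp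
    rw [hsplit, htail, Complex.exp_add, Complex.exp_sum]
    congr 1
    · exact Finset.prod_congr rfl fun j _ => Complex.exp_log (hne t ht j)
    · rw [exp_eq_one_add (t ^ 4 * M t)]
      ring

lemma iteratedDeriv_pow_mul : ∀ (j : ℕ) (m : ℕ), j < m → ∀ R : ℂ → ℂ,
    DifferentiableOn ℂ R (ball (0 : ℂ) 1) →
    iteratedDeriv j (fun t => t ^ m * R t) 0 = 0 := by
  intro j
  induction j with
  | zero =>
    intro m hm R hR
    simp [zero_pow (by omega : m ≠ 0)]
  | succ j ih =>
    intro m hm R hR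
    rw [iteratedDeriv_succ']
    have hR' : DifferentiableOn ℂ (deriv R) (ball (0 : ℂ) 1) :=
      ((hR.analyticOnNhd isOpen_ball).deriv).differentiableOn
    have heq : deriv (fun t : ℂ => t ^ m * R t) =ᶠ[nhds (0 : ℂ)]
        fun t => t ^ (m - 1) * ((m : ℂ) * R t + t * deriv R t) := by
      filter_upwards [isOpen_ball.mem_nhds (mem_ball_self one_pos)] with z hz
      have h1 : DifferentiableAt ℂ R z := hR.differentiableAt (isOpen_ball.mem_nhds hz)
      rw [deriv_fun_mul (differentiableAt_pow m) h1]
      simp only [deriv_pow_field]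
      obtain ⟨m', rfl⟩ : ∃ m', m = m' + 1 := ⟨m - 1, by omega⟩
      simp only [Nat.add_sub_cancel]
      ring
    rw [heq.iteratedDeriv_eq j]
    exact ih (m - 1) (by omega) _
      (((differentiableOn_const _).mul hR).add (differentiableOn_id.mul hR'))

lemma iteratedDeriv_add_on : ∀ (j : ℕ) (P R : ℂ → ℂ),
    DifferentiableOn ℂ P (ball (0 : ℂ) 1) → DifferentiableOn ℂ R (ball (0 : ℂ) 1) →
    iteratedDeriv j (fun t => P t + R t) 0 = iteratedDeriv j P 0 + iteratedDeriv j R 0 := by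
  intro j
  induction j with
  | zero => intro P R _ _; simp
  | succ j ih =>
    intro P R hP hR
    rw [iteratedDeriv_succ', iteratedDeriv_succ', iteratedDeriv_succ']
    have heq : deriv (fun t => P t + R t) =ᶠ[nhds (0 : ℂ)]
        fun t => deriv P t + deriv R t := by
      filter_upwards [isOpen_ball.mem_nhds (mem_ball_self one_pos)] with z hz
      exact deriv_add (hP.differentiableAt (isOpen_ball.mem_nhds hz))
        (hR.differentiableAt (isOpen_ball.mem_nhds hz))
    rw [heq.iteratedDeriv_eq j]
    exact ih _ _ ((hP.analyticOnNhd isOpen_ball).deriv.differentiableOn)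
      ((hR.analyticOnNhd isOpen_ball).deriv.differentiableOn)

lemma deriv_cubic : deriv (fun t : ℂ => -1 - 24 * t - 24 * t ^ 2 - 96 * t ^ 3)
    = fun t : ℂ => -24 - 48 * t - 288 * t ^ 2 := by
  funext t
  have h2 := hasDerivAt_pow 2 t
  have h3 := hasDerivAt_pow 3 t
  have h := (((hasDerivAt_const t (-1 : ℂ)).sub ((hasDerivAt_id t).const_mul (24 : ℂ))).sub
      (h2.const_mul (24 : ℂ))).sub (h3.const_mul (96 : ℂ))
  have h' : HasDerivAt (fun t : ℂ => -1 - 24 * t - 24 * t ^ 2 - 96 * t ^ 3)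
      (-24 - 48 * t - 288 * t ^ 2) t := by
    refine h.congr_deriv ?_
    push_cast
    ring
  exact h'.deriv

lemma deriv_quadratic : deriv (fun t : ℂ => -24 - 48 * t - 288 * t ^ 2)
    = fun t : ℂ => -48 - 576 * t := by
  funext t
  have h2 := hasDerivAt_pow 2 t
  have h := ((hasDerivAt_const t (-24 : ℂ)).sub ((hasDerivAt_id t).const_mul (48 : ℂ))).sub
      (h2.const_mul (288 : ℂ))
  have h' : HasDerivAt (fun t : ℂ => -24 - 48 * t - 288 * t ^ 2) (-48 - 576 * t) t := by
    refine h.congr_deriv ?_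
    push_cast
    ring
  exact h'.deriv

lemma deriv_linear : deriv (fun t : ℂ => -48 - 576 * t) = fun _ : ℂ => (-576 : ℂ) := by
  funext t
  have h := (hasDerivAt_const t (-48 : ℂ)).sub ((hasDerivAt_id t).const_mul (576 : ℂ))
  have h' : HasDerivAt (fun t : ℂ => -48 - 576 * t) (-576 : ℂ) t := by
    refine h.congr_deriv ?_
    ring
  exact h'.deriv

lemma cubic_differentiable :
    Differentiable ℂ (fun t : ℂ => -1 - 24 * t - 24 * t ^ 2 - 96 * t ^ 3) := by
  fun_prop

lemma iter1 : iteratedDeriv 1 (fun t : ℂ => -1 - 24 * t - 24 * t ^ 2 - 96 * t ^ 3) 0 = -24 := by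
  rw [iteratedDeriv_one, deriv_cubic]
  norm_num

lemma iter2 : iteratedDeriv 2 (fun t : ℂ => -1 - 24 * t - 24 * t ^ 2 - 96 * t ^ 3) 0 = -48 := by
  show iteratedDeriv (1 + 1) (fun t : ℂ => -1 - 24 * t - 24 * t ^ 2 - 96 * t ^ 3) 0 = -48
  rw [iteratedDeriv_succ', deriv_cubic, iteratedDeriv_one, deriv_quadratic]
  norm_num

lemma iter3 : iteratedDeriv 3 (fun t : ℂ => -1 - 24 * t - 24 * t ^ 2 - 96 * t ^ 3) 0 = -576 := by
  show iteratedDeriv (1 + 1 + 1) (fun t : ℂ => -1 - 24 * t - 24 * t ^ 2 - 96 * t ^ 3) 0 = -576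
  rw [iteratedDeriv_succ', deriv_cubic, iteratedDeriv_succ', deriv_quadratic, iteratedDeriv_one,
    deriv_linear]

end EightDelta2Aux

/-- The expansion of `8δ₂` in the variable `t = q^{1/2} = e^{πiτ}` begins
`8δ₂ = -1 - 24q^{1/2} - 24q - 96q^{3/2} + ⋯`: `8δ₂` is a holomorphic function of `t` on the
punctured unit disc extending holomorphically to `t = 0`, and its Taylor coefficients at `t = 0`
in degrees `0`, `1`, `2`, `3` are `-1`, `-24`, `-24`, `-96`. -/
theorem eight_delta2_halfq_expansion :
    ∃ g : ℂ → ℂ, DifferentiableOn ℂ g (Metric.ball (0 : ℂ) 1) ∧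
      (∀ τ : ℂ, 0 < τ.im → g (qh τ) = 8 * delta2 τ) ∧
      g 0 = -1 ∧
      iteratedDeriv 1 g 0 / (Nat.factorial 1 : ℂ) = -24 ∧
      iteratedDeriv 2 g 0 / (Nat.factorial 2 : ℂ) = -24 ∧
      iteratedDeriv 3 g 0 / (Nat.factorial 3 : ℂ) = -96 := by
  obtain ⟨KA, hKAd, hKA⟩ := EightDelta2Aux.prod_rep (-1) (by norm_num) (fun j => 2 * j + 2) 1
    (fun j => by show j + 1 ≤ 2 * j + 2; omega) (fun j => by show j + 4 ≤ 2 * (j + 1) + 2; omega)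
  obtain ⟨KB, hKBd, hKB⟩ := EightDelta2Aux.prod_rep 1 (by norm_num) (fun j => 2 * j + 2) 1
    (fun j => by show j + 1 ≤ 2 * j + 2; omega) (fun j => by show j + 4 ≤ 2 * (j + 1) + 2; omega)
  obtain ⟨KC, hKCd, hKC⟩ := EightDelta2Aux.prod_rep 1 (by norm_num) (fun j => 2 * j + 1) 2
    (fun j => by show j + 1 ≤ 2 * j + 1; omega) (fun j => by show j + 4 ≤ 2 * (j + 2) + 1; omega)
  have hKA' : ∀ t : ℂ, ‖t‖ < 1 → (Multipliable fun j : ℕ => 1 + (-1 : ℂ) * t ^ (2 * j + 2)) ∧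
      ∏' j : ℕ, (1 + (-1 : ℂ) * t ^ (2 * j + 2)) =
        (∏ j ∈ Finset.range 1, (1 + (-1 : ℂ) * t ^ (2 * j + 2))) * (1 + t ^ 4 * KA t) := hKA
  have hKB' : ∀ t : ℂ, ‖t‖ < 1 → (Multipliable fun j : ℕ => 1 + (1 : ℂ) * t ^ (2 * j + 2)) ∧
      ∏' j : ℕ, (1 + (1 : ℂ) * t ^ (2 * j + 2)) =
        (∏ j ∈ Finset.range 1, (1 + (1 : ℂ) * t ^ (2 * j + 2))) * (1 + t ^ 4 * KB t) := hKB
  have hKC' : ∀ t : ℂ, ‖t‖ < 1 → (Multipliable fun j : ℕ => 1 + (1 : ℂ) * t ^ (2 * j + 1)) ∧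
      ∏' j : ℕ, (1 + (1 : ℂ) * t ^ (2 * j + 1)) =
        (∏ j ∈ Finset.range 2, (1 + (1 : ℂ) * t ^ (2 * j + 1))) * (1 + t ^ 4 * KC t) := hKC
  obtain ⟨a4, ha4⟩ : ∃ f : ℂ → ℂ, f = fun t =>
      KA t * (4 + 6 * (t ^ 4 * KA t) + 4 * (t ^ 4 * KA t) ^ 2 + (t ^ 4 * KA t) ^ 3) := ⟨_, rfl⟩
  obtain ⟨b8, hb8⟩ : ∃ f : ℂ → ℂ, f = fun t =>
      KB t * (8 + 28 * (t ^ 4 * KB t) + 56 * (t ^ 4 * KB t) ^ 2 + 70 * (t ^ 4 * KB t) ^ 3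
        + 56 * (t ^ 4 * KB t) ^ 4 + 28 * (t ^ 4 * KB t) ^ 5 + 8 * (t ^ 4 * KB t) ^ 6
        + (t ^ 4 * KB t) ^ 7) := ⟨_, rfl⟩
  obtain ⟨c8, hc8⟩ : ∃ f : ℂ → ℂ, f = fun t =>
      KC t * (8 + 28 * (t ^ 4 * KC t) + 56 * (t ^ 4 * KC t) ^ 2 + 70 * (t ^ 4 * KC t) ^ 3
        + 56 * (t ^ 4 * KC t) ^ 4 + 28 * (t ^ 4 * KC t) ^ 5 + 8 * (t ^ 4 * KC t) ^ 6
        + (t ^ 4 * KC t) ^ 7) := ⟨_, rfl⟩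
  obtain ⟨sf, hsf⟩ : ∃ f : ℂ → ℂ, f = fun t => a4 t + b8 t + t ^ 4 * (a4 t * b8 t) := ⟨_, rfl⟩
  obtain ⟨wf, hwf⟩ : ∃ f : ℂ → ℂ, f = fun t => a4 t + c8 t + t ^ 4 * (a4 t * c8 t) := ⟨_, rfl⟩
  obtain ⟨R, hRdef⟩ : ∃ f : ℂ → ℂ, f = fun t =>
      ((-28:ℂ) + (-104:ℂ)*t + (-132:ℂ)*t^2 + (168:ℂ)*t^3 + (90:ℂ)*t^4 + (160:ℂ)*t^5 + (-56:ℂ)*t^6 + (424:ℂ)*t^7 + (382:ℂ)*t^8 + (-776:ℂ)*t^9 + (432:ℂ)*t^10 + (880:ℂ)*t^11 + (-585:ℂ)*t^12 + (-592:ℂ)*t^13 + (804:ℂ)*t^14 + (72:ℂ)*t^15 + (-1764:ℂ)*t^16 + (-152:ℂ)*t^17 + (804:ℂ)*t^18 + (-928:ℂ)*t^19 + (-585:ℂ)*t^20 + (992:ℂ)*t^21 + (432:ℂ)*t^22 + (-328:ℂ)*t^23 + (382:ℂ)*t^24 + (552:ℂ)*t^25 + (-56:ℂ)*t^26 + (-112:ℂ)*t^27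 + (90:ℂ)*t^28 + (-24:ℂ)*t^29 + (-132:ℂ)*t^30 + (-72:ℂ)*t^31 + (-28:ℂ)*t^32 + (-32:ℂ)*t^33 + (-24:ℂ)*t^34 + (-8:ℂ)*t^35 + (-1:ℂ)*t^36)
      - (16 * t * ((1 - t ^ 2) ^ 4 * (1 + t ^ 2) ^ 8) * sf t
        + ((1 - t ^ 2) ^ 4 * (1 + t) ^ 8 * (1 + t ^ 3) ^ 8) * wf t) := ⟨_, rfl⟩
  have hA4 : ∀ t : ℂ, (1 + t ^ 4 * KA t) ^ 4 = 1 + t ^ 4 * a4 t := by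
    intro t; simp only [ha4]; ring
  have hB8 : ∀ t : ℂ, (1 + t ^ 4 * KB t) ^ 8 = 1 + t ^ 4 * b8 t := by
    intro t; simp only [hb8]; ring
  have hC8 : ∀ t : ℂ, (1 + t ^ 4 * KC t) ^ 8 = 1 + t ^ 4 * c8 t := by
    intro t; simp only [hc8]; ring
  have hS : ∀ t : ℂ, (1 + t ^ 4 * a4 t) * (1 + t ^ 4 * b8 t) = 1 + t ^ 4 * sf t := by
    intro t; simp only [hsf]; ring
  have hW : ∀ t : ℂ, (1 + t ^ 4 * a4 t) * (1 + t ^ 4 * c8 t) = 1 + t ^ 4 * wf t := by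
    intro t; simp only [hwf]; ring
  have hRdiff : DifferentiableOn ℂ R (Metric.ball (0 : ℂ) 1) := by
    simp only [hRdef, hsf, hwf, ha4, hb8, hc8]
    fun_prop
  refine ⟨fun t => (-1 - 24 * t - 24 * t ^ 2 - 96 * t ^ 3) + t ^ 4 * R t, ?_, ?_, ?_, ?_, ?_, ?_⟩
  · exact (EightDelta2Aux.cubic_differentiable.differentiableOn).add
      (((differentiable_pow 4).differentiableOn).mul hRdiff)
  · intro τ hτ
    have ht : ‖qh τ‖ < 1 := by
      rw [qh, show ‖Complex.exp ((π : ℂ) * Complex.I * τ)‖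
          = Real.exp (((π : ℂ) * Complex.I * τ).re) from by
        rw [Complex.norm_exp], Real.exp_lt_one_iff]
      have hre : ((π : ℂ) * Complex.I * τ).re = -(π * τ.im) := by
        simp [Complex.mul_re, Complex.mul_im]
      rw [hre]
      have := Real.pi_pos
      nlinarith
    have hq2 : qq τ = qh τ ^ 2 := by
      rw [qq, qh, ← Complex.exp_nat_mul]; congr 1; push_cast; ring
    have hexp4 : Complex.exp ((π : ℂ) * Complex.I * τ / 4) ^ 4 = qh τ := by
      rw [← Complex.exp_nat_mul, qh]; congr 1; push_cast; ring
    have h1 : theta1 τ ^ 4 = 16 * qh τ *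
        ((∏' j : ℕ, (1 + (-1 : ℂ) * qh τ ^ (2 * j + 2))) *
         ((∏' j : ℕ, (1 + (1 : ℂ) * qh τ ^ (2 * j + 2))) *
          (∏' j : ℕ, (1 + (1 : ℂ) * qh τ ^ (2 * j + 2))))) ^ 4 := by
      have hterm : ∀ j : ℕ, (1 - qq τ ^ (j + 1)) * (1 + qq τ ^ (j + 1)) ^ 2
          = (1 + (-1 : ℂ) * qh τ ^ (2 * j + 2)) *
            ((1 + (1 : ℂ) * qh τ ^ (2 * j + 2)) * (1 + (1 : ℂ) * qh τ ^ (2 * j + 2))) := by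
        intro j
        rw [hq2, ← pow_mul, show 2 * (j + 1) = 2 * j + 2 by ring]
        ring
      simp only [theta1]
      rw [tprod_congr hterm, Multipliable.tprod_mul (hKA' _ ht).1 ((hKB' _ ht).1.mul (hKB' _ ht).1),
        Multipliable.tprod_mul (hKB' _ ht).1 (hKB' _ ht).1, mul_pow, mul_pow, hexp4]
      norm_num
    have h3 : theta3 τ ^ 4 =
        ((∏' j : ℕ, (1 + (-1 : ℂ) * qh τ ^ (2 * j + 2))) *
         ((∏' j : ℕ, (1 + (1 : ℂ) * qh τ ^ (2 * j + 1))) *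
          (∏' j : ℕ, (1 + (1 : ℂ) * qh τ ^ (2 * j + 1))))) ^ 4 := by
      have hterm : ∀ j : ℕ, (1 - qq τ ^ (j + 1)) * (1 + qh τ ^ (2 * j + 1)) ^ 2
          = (1 + (-1 : ℂ) * qh τ ^ (2 * j + 2)) *
            ((1 + (1 : ℂ) * qh τ ^ (2 * j + 1)) * (1 + (1 : ℂ) * qh τ ^ (2 * j + 1))) := by
        intro j
        rw [hq2, ← pow_mul, show 2 * (j + 1) = 2 * j + 2 by ring]
        ring
      simp only [theta3]
      rw [tprod_congr hterm, Multipliable.tprod_mul (hKA' _ ht).1 ((hKC' _ ht).1.mul (hKC' _ ht).1),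
        Multipliable.tprod_mul (hKC' _ ht).1 (hKC' _ ht).1]
    have hd : 8 * delta2 τ = -(theta1 τ ^ 4 + theta3 τ ^ 4) := by
      simp only [delta2]; ring
    have e1 : ∀ x y u v : ℂ, (x * u * ((y * v) * (y * v))) ^ 4
        = x ^ 4 * y ^ 8 * (u ^ 4 * v ^ 8) := by intros; ring
    show (-1 - 24 * qh τ - 24 * qh τ ^ 2 - 96 * qh τ ^ 3) + qh τ ^ 4 * R (qh τ) = 8 * delta2 τ
    rw [hd, h1, h3, (hKA' _ ht).2, (hKB' _ ht).2, (hKC' _ ht).2]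
    simp only [Finset.prod_range_succ, Finset.prod_range_one]
    simp only [e1]
    rw [hA4, hB8, hC8, hS, hW]
    simp only [hRdef]
    ring
  · norm_num
  · rw [EightDelta2Aux.iteratedDeriv_add_on 1 _ (fun t => t ^ 4 * R t)
      EightDelta2Aux.cubic_differentiable.differentiableOn
      ((differentiable_pow 4).differentiableOn.mul hRdiff),
      EightDelta2Aux.iteratedDeriv_pow_mul 1 4 (by omega) R hRdiff, EightDelta2Aux.iter1]
    norm_num
  · rw [EightDelta2Aux.iteratedDeriv_add_on 2 _ (fun t => t ^ 4 * R t)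
      EightDelta2Aux.cubic_differentiable.differentiableOn
      ((differentiable_pow 4).differentiableOn.mul hRdiff),
      EightDelta2Aux.iteratedDeriv_pow_mul 2 4 (by omega) R hRdiff, EightDelta2Aux.iter2]
    norm_num [Nat.factorial]
  · rw [EightDelta2Aux.iteratedDeriv_add_on 3 _ (fun t => t ^ 4 * R t)
      EightDelta2Aux.cubic_differentiable.differentiableOn
      ((differentiable_pow 4).differentiableOn.mul hRdiff),
      EightDelta2Aux.iteratedDeriv_pow_mul 3 4 (by omega) R hRdiff, EightDelta2Aux.iter3]
    norm_num [Nat.factorial]
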